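/- arXiv:2011.05981 — 3 statements merged into one kernel-verified Lean document; each statement's English description precedes it below -/
import Mathlib

section
/- Let (W,σ) be a finite-dimensional real symplectic vector space and S : W → W a linear isomorphism. Then S^σ = S if and only if there exists a linear isomorphism φ : W → W such that S = φ^σ ∘ φ. -/
open LinearMap Module

lemma sympl_split {W : Type*} [AddCommGroup W] [Module ℝ W]
    (σ : W →ₗ[ℝ] W →ₗ[ℝ] ℝ) (halt : ∀ x y, σ x y = - σ y x)
    (ξ η : W) (hξη : σ ξ η = 1) :
    ∃ e : W ≃ₗ[ℝ] (ℝ × ℝ) × ↥(LinearMap.ker (σ ξ) ⊓ LinearMap.ker (σ η)),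
      (∀ a b u, e.symm ((a, b), u) = a • η - b • ξ + (u : W)) ∧
      (∀ (a b c d : ℝ) (u v : ↥(LinearMap.ker (σ ξ) ⊓ LinearMap.ker (σ η))),
        σ (e.symm ((a, b), u)) (e.symm ((c, d), v)) = (a * d - b * c) + σ u v) := by
  have alt0 : ∀ x, σ x x = 0 := fun x => by have := halt x x; linarith
  have hηξ : σ η ξ = -1 := by rw [halt, hξη]
  set U : Submodule ℝ W := LinearMap.ker (σ ξ) ⊓ LinearMap.ker (σ η) with hU
  have hUξ : ∀ u : U, σ ξ (u : W) = 0 := fun u => u.2.1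
  have hUη : ∀ u : U, σ η (u : W) = 0 := fun u => u.2.2
  have hUξ' : ∀ u : U, σ (u : W) ξ = 0 := fun u => by rw [halt, hUξ]; ring
  have hUη' : ∀ u : U, σ (u : W) η = 0 := fun u => by rw [halt, hUη]; ring
  set q : W →ₗ[ℝ] W := LinearMap.id - (σ ξ).smulRight η + (σ η).smulRight ξ with hq
  have hqmem : ∀ w, q w ∈ U := by
    intro w
    have hqw : q w = w - σ ξ w • η + σ η w • ξ := rfl
    refine Submodule.mem_inf.mpr ⟨LinearMap.mem_ker.mpr ?_, LinearMap.mem_ker.mpr ?_⟩ <;>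
      rw [hqw] <;>
      simp only [map_add, map_sub, map_smul, smul_eq_mul, hξη, hηξ, alt0] <;> ring
  set r : W →ₗ[ℝ] U := q.codRestrict U hqmem with hr
  set j : (ℝ × ℝ) × U →ₗ[ℝ] W :=
    ((LinearMap.fst ℝ ℝ ℝ).comp (LinearMap.fst ℝ (ℝ × ℝ) U)).smulRight η
      - ((LinearMap.snd ℝ ℝ ℝ).comp (LinearMap.fst ℝ (ℝ × ℝ) U)).smulRight ξ
      + U.subtype.comp (LinearMap.snd ℝ (ℝ × ℝ) U) with hj
  have hjap : ∀ (a b : ℝ) (u : U), j ((a, b), u) = a • η - b • ξ + (u : W) := fun _ _ _ => rfl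
  set p : W →ₗ[ℝ] (ℝ × ℝ) × U := ((σ ξ).prod (σ η)).prod r with hp
  have hσξj : ∀ (a b : ℝ) (u : U), σ ξ (j ((a, b), u)) = a := by
    intro a b u
    simp only [hjap, map_add, map_sub, map_smul, smul_eq_mul, hξη, alt0, hUξ]; ring
  have hσηj : ∀ (a b : ℝ) (u : U), σ η (j ((a, b), u)) = b := by
    intro a b u
    simp only [hjap, map_add, map_sub, map_smul, smul_eq_mul, hηξ, alt0, hUη]; ring
  have h1 : p ∘ₗ j = LinearMap.id := by
    apply LinearMap.ext
    rintro ⟨⟨a, b⟩, u⟩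
    have h3 : (r (j ((a, b), u)) : W) = (u : W) := by
      have : (r (j ((a, b), u)) : W) = j ((a, b), u) - σ ξ (j ((a,b),u)) • η
          + σ η (j ((a,b),u)) • ξ := rfl
      rw [this, hσξj, hσηj, hjap]; abel
    refine Prod.ext (Prod.ext ?_ ?_) (Subtype.ext ?_)
    · exact hσξj a b u
    · exact hσηj a b u
    · exact h3
  have h2 : j ∘ₗ p = LinearMap.id := by
    apply LinearMap.ext
    intro w
    show σ ξ w • η - σ η w • ξ + (w - σ ξ w • η + σ η w • ξ) = w
    abel
  let E : W ≃ₗ[ℝ] (ℝ × ℝ) × ↥U := (LinearEquiv.ofLinear j p h2 h1).symm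
  have hEsymm : ∀ (a b : ℝ) (u : ↥U), E.symm ((a, b), u) = a • η - b • ξ + (u : W) := by
    intro a b u
    show j ((a, b), u) = _
    exact hjap a b u
  refine ⟨E, hEsymm, ?_⟩
  intro a b c d u v
  rw [hEsymm, hEsymm]
  simp only [map_add, map_sub, map_smul, LinearMap.add_apply, LinearMap.sub_apply,
    LinearMap.smul_apply, smul_eq_mul, hξη, hηξ, alt0, hUξ, hUη, hUξ', hUη']
  ring

universe u v

lemma sympl_equiv_of_forms (n : ℕ) :
    ∀ {W : Type u} {V : Type v} [AddCommGroup W] [Module ℝ W] [AddCommGroup V] [Module ℝ V]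
      [FiniteDimensional ℝ W] [FiniteDimensional ℝ V]
      (σ : W →ₗ[ℝ] W →ₗ[ℝ] ℝ) (τ : V →ₗ[ℝ] V →ₗ[ℝ] ℝ),
      (∀ x y, σ x y = -σ y x) → (∀ x, (∀ y, σ x y = 0) → x = 0) →
      (∀ x y, τ x y = -τ y x) → (∀ x, (∀ y, τ x y = 0) → x = 0) →
      Module.finrank ℝ W = n → Module.finrank ℝ V = n →
      ∃ e : W ≃ₗ[ℝ] V, ∀ x y, σ x y = τ (e x) (e y) := by
  induction n using Nat.strong_induction_on with
  | _ n IH =>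
  intro W V _ _ _ _ _ _ σ τ hσa hσn hτa hτn hrW hrV
  rcases Nat.eq_zero_or_pos n with h0 | hpos
  · subst h0
    have hsW : Subsingleton W := (Module.finrank_zero_iff (R := ℝ)).mp hrW
    obtain ⟨e⟩ := FiniteDimensional.nonempty_linearEquiv_of_finrank_eq (hrW.trans hrV.symm)
    refine ⟨e, fun x y => ?_⟩
    rw [Subsingleton.elim x 0, Subsingleton.elim y 0]
    simp
  · -- find hyperbolic pairs
    have hW : Nontrivial W := Module.nontrivial_of_finrank_pos (R := ℝ) (hrW ▸ hpos)
    have hV : Nontrivial V := Module.nontrivial_of_finrank_pos (R := ℝ) (hrV ▸ hpos)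
    obtain ⟨ξ, hξ⟩ := exists_ne (0 : W)
    obtain ⟨ξ', hξ'⟩ := exists_ne (0 : V)
    have hη₀ : ∃ y, σ ξ y ≠ 0 := by
      by_contra h; push_neg at h; exact hξ (hσn ξ h)
    obtain ⟨η₀, hη₀⟩ := hη₀
    have hη₀' : ∃ y, τ ξ' y ≠ 0 := by
      by_contra h; push_neg at h; exact hξ' (hτn ξ' h)
    obtain ⟨η₀', hη₀'⟩ := hη₀'
    set η : W := (σ ξ η₀)⁻¹ • η₀ with hηdef
    set η' : V := (τ ξ' η₀')⁻¹ • η₀' with hη'def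
    have hξη : σ ξ η = 1 := by
      simp [hηdef, map_smul, smul_eq_mul, inv_mul_cancel₀ hη₀]
    have hξ'η' : τ ξ' η' = 1 := by
      simp [hη'def, map_smul, smul_eq_mul, inv_mul_cancel₀ hη₀']
    obtain ⟨eW, hWsymm, hWform⟩ := sympl_split σ hσa ξ η hξη
    obtain ⟨eV, hVsymm, hVform⟩ := sympl_split τ hτa ξ' η' hξ'η'
    have hfW : Module.finrank ℝ W
        = 2 + Module.finrank ℝ ↥(LinearMap.ker (σ ξ) ⊓ LinearMap.ker (σ η)) := by
      rw [eW.finrank_eq, Module.finrank_prod, Module.finrank_prod, Module.finrank_self]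
    have hfV : Module.finrank ℝ V
        = 2 + Module.finrank ℝ ↥(LinearMap.ker (τ ξ') ⊓ LinearMap.ker (τ η')) := by
      rw [eV.finrank_eq, Module.finrank_prod, Module.finrank_prod, Module.finrank_self]
    set σ' := σ.domRestrict₁₂ (LinearMap.ker (σ ξ) ⊓ LinearMap.ker (σ η))
      (LinearMap.ker (σ ξ) ⊓ LinearMap.ker (σ η)) with hσ'def
    set τ' := τ.domRestrict₁₂ (LinearMap.ker (τ ξ') ⊓ LinearMap.ker (τ η'))
      (LinearMap.ker (τ ξ') ⊓ LinearMap.ker (τ η')) with hτ'def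
    have hσ'n : ∀ x, (∀ y, σ' x y = 0) → x = 0 := by
      intro u hu
      have hcoe : (u : W) = 0 := by
        apply hσn
        intro w
        have hw' : w = eW.symm (((eW w).1.1, (eW w).1.2), (eW w).2) := by
          rw [show (((eW w).1.1, (eW w).1.2), (eW w).2) = eW w from rfl,
            eW.symm_apply_apply]
        have hu' : (u : W) = eW.symm ((0, 0), u) := by rw [hWsymm]; simp
        rw [hw', hu', hWform]
        have := hu (eW w).2
        simp only [hσ'def, LinearMap.domRestrict₁₂_apply] at this
        rw [this]; ring
      exact Subtype.ext hcoe
    have hτ'n : ∀ x, (∀ y, τ' x y = 0) → x = 0 := by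
      intro u hu
      have hcoe : (u : V) = 0 := by
        apply hτn
        intro w
        have hw' : w = eV.symm (((eV w).1.1, (eV w).1.2), (eV w).2) := by
          rw [show (((eV w).1.1, (eV w).1.2), (eV w).2) = eV w from rfl,
            eV.symm_apply_apply]
        have hu' : (u : V) = eV.symm ((0, 0), u) := by rw [hVsymm]; simp
        rw [hw', hu', hVform]
        have := hu (eV w).2
        simp only [hτ'def, LinearMap.domRestrict₁₂_apply] at this
        rw [this]; ring
      exact Subtype.ext hcoe
    have hσ'a : ∀ x y, σ' x y = -σ' y x := fun x y => hσa x y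
    have hτ'a : ∀ x y, τ' x y = -τ' y x := fun x y => hτa x y
    have hlt : Module.finrank ℝ ↥(LinearMap.ker (σ ξ) ⊓ LinearMap.ker (σ η)) < n := by omega
    have hrk : Module.finrank ℝ ↥(LinearMap.ker (τ ξ') ⊓ LinearMap.ker (τ η'))
        = Module.finrank ℝ ↥(LinearMap.ker (σ ξ) ⊓ LinearMap.ker (σ η)) := by omega
    obtain ⟨e', he'⟩ := IH _ hlt σ' τ' hσ'a hσ'n hτ'a hτ'n rfl hrk
    set mid : ((ℝ × ℝ) × ↥(LinearMap.ker (σ ξ) ⊓ LinearMap.ker (σ η))) ≃ₗ[ℝ]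
        ((ℝ × ℝ) × ↥(LinearMap.ker (τ ξ') ⊓ LinearMap.ker (τ η'))) :=
      LinearEquiv.prodCongr (LinearEquiv.refl ℝ (ℝ × ℝ)) e' with hmid
    refine ⟨eW.trans (mid.trans eV.symm), fun x y => ?_⟩
    have hx' : x = eW.symm (((eW x).1.1, (eW x).1.2), (eW x).2) := by
      rw [show (((eW x).1.1, (eW x).1.2), (eW x).2) = eW x from rfl, eW.symm_apply_apply]
    have hy' : y = eW.symm (((eW y).1.1, (eW y).1.2), (eW y).2) := by
      rw [show (((eW y).1.1, (eW y).1.2), (eW y).2) = eW y from rfl, eW.symm_apply_apply]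
    have hex : (eW.trans (mid.trans eV.symm)) x
        = eV.symm (((eW x).1.1, (eW x).1.2), e' (eW x).2) := by
      simp only [LinearEquiv.trans_apply, hmid, LinearEquiv.prodCongr_apply,
        LinearEquiv.refl_apply, Prod.map]
    have hey : (eW.trans (mid.trans eV.symm)) y
        = eV.symm (((eW y).1.1, (eW y).1.2), e' (eW y).2) := by
      simp only [LinearEquiv.trans_apply, hmid, LinearEquiv.prodCongr_apply,
        LinearEquiv.refl_apply, Prod.map]
    conv_lhs => rw [hx', hy', hWform]
    rw [hex, hey, hVform]
    have := he' (eW x).2 (eW y).2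
    simp only [hσ'def, hτ'def, LinearMap.domRestrict₁₂_apply] at this
    rw [this]

/-- For a linear isomorphism `S` of a finite-dimensional real symplectic
vector space `(W,σ)`, one has `S^σ = S` iff `S = φ^σ ∘ φ` for some linear isomorphism `φ`. -/
theorem selfadjoint_iff_adjoint_comp_factorization
    {W : Type*} [AddCommGroup W] [Module ℝ W] [FiniteDimensional ℝ W]
    (σ : W →ₗ[ℝ] W →ₗ[ℝ] ℝ)
    (halt : ∀ ξ η, σ ξ η = - σ η ξ)
    (hnd : ∀ ξ, (∀ η, σ ξ η = 0) → ξ = 0)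
    (S : W →ₗ[ℝ] W) (hS : Function.Bijective S)
    (Sσ : W →ₗ[ℝ] W)
    (hSσ : ∀ ξ η, σ (Sσ ξ) η = σ ξ (S η)) :
    Sσ = S ↔
      ∃ φ φs : W →ₗ[ℝ] W, Function.Bijective φ ∧
        (∀ ξ η, σ (φs ξ) η = σ ξ (φ η)) ∧ S = φs ∘ₗ φ := by
  constructor
  · intro hσS
    set τ : W →ₗ[ℝ] W →ₗ[ℝ] ℝ := σ.compl₂ S with hτ
    have hτap : ∀ x y, τ x y = σ x (S y) := fun x y => rfl
    have hτa : ∀ x y, τ x y = -τ y x := by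
      intro x y
      rw [hτap, hτap]
      have h1 : σ (S y) x = σ y (S x) := by have := hSσ y x; rwa [hσS] at this
      rw [halt x (S y), h1]
    have hτn : ∀ x, (∀ y, τ x y = 0) → x = 0 := by
      intro x hx
      apply hnd
      intro z
      obtain ⟨y, rfl⟩ := hS.2 z
      exact hx y
    obtain ⟨e, he⟩ := sympl_equiv_of_forms (Module.finrank ℝ W) τ σ hτa hτn halt hnd rfl rfl
    set φ : W →ₗ[ℝ] W := e.toLinearMap with hφ
    -- σ as a map to the dual is bijective
    have hBinj : Function.Injective σ := by
      intro x y hxy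
      have h0 : ∀ z, σ (x - y) z = 0 := by
        intro z
        rw [map_sub, LinearMap.sub_apply, hxy, sub_self]
      have := hnd _ h0
      rwa [sub_eq_zero] at this
    have hrk : Module.finrank ℝ W = Module.finrank ℝ (W →ₗ[ℝ] ℝ) :=
      (Subspace.dual_finrank_eq (K := ℝ) (V := W)).symm
    have hBsurj : Function.Surjective σ :=
      (LinearMap.injective_iff_surjective_of_finrank_eq_finrank hrk).mp hBinj
    set Beq : W ≃ₗ[ℝ] (W →ₗ[ℝ] ℝ) := LinearEquiv.ofBijective σ ⟨hBinj, hBsurj⟩ with hBeq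
    set ψ : W →ₗ[ℝ] (W →ₗ[ℝ] ℝ) := (LinearMap.llcomp ℝ W W ℝ).flip φ ∘ₗ σ with hψ
    have hψap : ∀ ξ η, ψ ξ η = σ ξ (φ η) := fun ξ η => rfl
    set φs : W →ₗ[ℝ] W := Beq.symm.toLinearMap ∘ₗ ψ with hφs
    have hadj : ∀ ξ η, σ (φs ξ) η = σ ξ (φ η) := by
      intro ξ η
      have h1 : σ (φs ξ) = ψ ξ := by
        have : σ (φs ξ) = Beq (φs ξ) := rfl
        rw [this]
        show Beq (Beq.symm (ψ ξ)) = ψ ξ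
        exact Beq.apply_symm_apply _
      rw [h1, hψap]
    refine ⟨φ, φs, e.bijective, hadj, ?_⟩
    apply LinearMap.ext
    intro y
    have hz : ∀ z, σ (φs (φ y) - S y) z = 0 := by
      intro z
      rw [map_sub, LinearMap.sub_apply]
      have h1 : σ (φs (φ y)) z = σ (φ y) (φ z) := hadj (φ y) z
      have h2 : σ (S y) z = σ (φ y) (φ z) := by
        have ha : σ (S y) z = σ y (S z) := by have := hSσ y z; rwa [hσS] at this
        have hb : τ y z = σ (e y) (e z) := he y z
        rw [ha, ← hτap, hb]; rfl
      rw [h1, h2, sub_self]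
    have := hnd _ hz
    rw [sub_eq_zero] at this
    exact this.symm
  · rintro ⟨φ, φs, hφ, hadj, rfl⟩
    apply LinearMap.ext
    intro ξ
    have hz : ∀ η, σ (Sσ ξ - (φs ∘ₗ φ) ξ) η = 0 := by
      intro η
      rw [map_sub, LinearMap.sub_apply]
      have h1 : σ (Sσ ξ) η = σ (φ ξ) (φ η) := by
        rw [hSσ, LinearMap.comp_apply, halt ξ (φs (φ η)), hadj, halt (φ η) (φ ξ)]
        ring
      have h2 : σ ((φs ∘ₗ φ) ξ) η = σ (φ ξ) (φ η) := by
        rw [LinearMap.comp_apply, hadj]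
      rw [h1, h2, sub_self]
    have := hnd _ hz
    rwa [sub_eq_zero] at this
end

section
/- Let (W,σ) be a finite-dimensional real symplectic vector space and S : W → W a linear isomorphism with S^σ = S. Then det S > 0. -/
open Polynomial Matrix Filter

/-- Evaluating the characteristic polynomial. -/
lemma aux_eval_charpoly {n : Type*} [Fintype n] [DecidableEq n] (M : Matrix n n ℝ) (x : ℝ) :
    M.charpoly.eval x = (x • (1 : Matrix n n ℝ) - M).det := by
  unfold Matrix.charpoly
  rw [← Polynomial.coe_evalRingHom, RingHom.map_det]
  congr 1
  ext i j
  by_cases h : i = j <;>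
    simp [Matrix.charmatrix_apply, h, Matrix.one_apply, Matrix.smul_apply,
      Matrix.diagonal_apply]

/-- A nondegenerate real skew-symmetric matrix has positive determinant. -/
lemma aux_skew_det_pos {n : Type*} [Fintype n] [DecidableEq n] (J : Matrix n n ℝ)
    (hskew : Jᵀ = -J) (hdet : J.det ≠ 0) : 0 < J.det := by
  cases isEmpty_or_nonempty n with
  | inl h => simp [Matrix.det_isEmpty]
  | inr h =>
    -- no real eigenvalues
    have hnr : ∀ x : ℝ, (x • (1 : Matrix n n ℝ) - J).det ≠ 0 := by
      intro x hx
      obtain ⟨v, hv, hv0⟩ := Matrix.exists_mulVec_eq_zero_iff.mpr hx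
      have hJv : J *ᵥ v = x • v := by
        rw [Matrix.sub_mulVec, sub_eq_zero] at hv0
        simpa [Matrix.smul_mulVec, Matrix.one_mulVec] using hv0.symm
      have h1 : v ⬝ᵥ (J *ᵥ v) = 0 := by
        have h2 : v ⬝ᵥ (J *ᵥ v) = (Jᵀ *ᵥ v) ⬝ᵥ v := by
          rw [Matrix.dotProduct_mulVec, Matrix.mulVec_transpose]
        rw [hskew, Matrix.neg_mulVec, neg_dotProduct,
          dotProduct_comm] at h2
        rw [dotProduct_comm]
        linarith
      rw [hJv, dotProduct_smul, smul_eq_mul] at h1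
      have hvv : v ⬝ᵥ v ≠ 0 := fun hc => hv (dotProduct_self_eq_zero.mp hc)
      have hx0 : x = 0 := by
        rcases mul_eq_zero.mp h1 with h | h
        · exact h
        · exact absurd h hvv
      subst hx0
      rw [zero_smul, zero_sub, Matrix.det_neg] at hx
      rcases mul_eq_zero.mp hx with h | h
      · exact absurd h (pow_ne_zero _ (by norm_num))
      · exact hdet h
    -- char polynomial has no real roots
    have hp : ∀ x : ℝ, J.charpoly.eval x ≠ 0 := fun x hx =>
      hnr x (by rwa [aux_eval_charpoly] at hx)
    have hmonic : J.charpoly.Monic := Matrix.charpoly_monic J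
    have hdeg : 0 < J.charpoly.degree := by
      have hcard : 0 < Fintype.card n := Fintype.card_pos
      have := Matrix.charpoly_natDegree_eq_dim J
      rw [Polynomial.natDegree_pos_iff_degree_pos.symm, this]
      exact hcard
    -- the char polynomial is positive at 0
    have hpos : 0 < J.charpoly.eval 0 := by
      by_contra hle
      push_neg at hle
      have hlt : J.charpoly.eval 0 < 0 := lt_of_le_of_ne hle (hp 0)
      have htend : Tendsto (fun x => J.charpoly.eval x) atTop atTop :=
        J.charpoly.tendsto_atTop_of_leadingCoeff_nonneg hdeg
          (by rw [hmonic.leadingCoeff]; exact zero_le_one)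
      obtain ⟨b, hb⟩ := (htend.eventually_gt_atTop 0).exists_forall_of_atTop
      have hb0 : (0 : ℝ) ≤ max 1 b := le_trans zero_le_one (le_max_left _ _)
      have hbpos : 0 < J.charpoly.eval (max 1 b) := hb _ (le_max_right _ _)
      have hcont : ContinuousOn (fun x => J.charpoly.eval x) (Set.Icc 0 (max 1 b)) :=
        (Polynomial.continuous _).continuousOn
      have h0mem : (0 : ℝ) ∈ Set.Icc (J.charpoly.eval 0) (J.charpoly.eval (max 1 b)) :=
        ⟨le_of_lt hlt, le_of_lt hbpos⟩
      obtain ⟨x, _, hx⟩ := intermediate_value_Icc hb0 hcont h0mem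
      exact hp x hx
    -- the dimension is even (as a sign)
    have hsign : ((-1 : ℝ)) ^ Fintype.card n = 1 := by
      have h1 : J.det = ((-1 : ℝ)) ^ Fintype.card n * J.det := by
        conv_lhs => rw [← Matrix.det_transpose J, hskew, Matrix.det_neg]
      have := mul_right_cancel₀ hdet (by linarith [h1] : ((-1 : ℝ)) ^ Fintype.card n * J.det = 1 * J.det)
      exact this
    -- conclude
    have heval : J.charpoly.eval 0 = J.det := by
      rw [aux_eval_charpoly, zero_smul, zero_sub, Matrix.det_neg, hsign, one_mul]
    rwa [heval] at hpos

/-- If `S` is a linear isomorphism of a finite-dimensional real symplectic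
vector space `(W,σ)` with `S^σ = S` (i.e. `σ(Sξ,η) = σ(ξ,Sη)` for all `ξ,η`),
then `det S > 0`. -/
theorem det_pos_of_symplectic_selfadjoint
    {W : Type*} [AddCommGroup W] [Module ℝ W] [FiniteDimensional ℝ W]
    (σ : W →ₗ[ℝ] W →ₗ[ℝ] ℝ)
    (halt : ∀ ξ η, σ ξ η = - σ η ξ)
    (hnd : ∀ ξ, (∀ η, σ ξ η = 0) → ξ = 0)
    (S : W →ₗ[ℝ] W) (hS : Function.Bijective S)
    (hself : ∀ ξ η, σ (S ξ) η = σ ξ (S η)) :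
    0 < LinearMap.det S := by
  classical
  let b := Module.finBasis ℝ W
  set M := LinearMap.BilinForm.toMatrix b σ with hM
  set A := LinearMap.toMatrix b b S with hA
  -- M is skew-symmetric
  have hMskew : Mᵀ = -M := by
    ext i j
    simp only [Matrix.transpose_apply, Matrix.neg_apply, hM,
      LinearMap.BilinForm.toMatrix_apply]
    exact halt (b j) (b i)
  -- M has nonzero determinant
  have hMdet : M.det ≠ 0 := by
    rw [hM, ← LinearMap.BilinForm.nondegenerate_iff_det_ne_zero b]
    exact ⟨hnd, fun η h => hnd η (fun ξ => by rw [halt, h ξ, neg_zero])⟩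
  have hMpos : 0 < M.det := aux_skew_det_pos M hMskew hMdet
  -- The matrix of the bilinear form (ξ,η) ↦ σ(Sξ,η)
  have hcomp : LinearMap.BilinForm.toMatrix b (LinearMap.BilinForm.compLeft σ S) = Aᵀ * M :=
    LinearMap.BilinForm.toMatrix_compLeft b σ S
  have hNskew : (Aᵀ * M)ᵀ = -(Aᵀ * M) := by
    rw [← hcomp]
    ext i j
    simp only [Matrix.transpose_apply, Matrix.neg_apply,
      LinearMap.BilinForm.toMatrix_apply, LinearMap.BilinForm.compLeft_apply]
    calc σ (S (b j)) (b i) = σ (b j) (S (b i)) := hself _ _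
      _ = - σ (S (b i)) (b j) := halt _ _
  -- det S is nonzero
  have hSdet : LinearMap.det S ≠ 0 := by
    have : IsUnit (LinearMap.det S) := by
      have := (LinearEquiv.ofBijective S hS).isUnit_det'
      exact this
    exact this.ne_zero
  have hAdet : A.det = LinearMap.det S := LinearMap.det_toMatrix b S
  have hNdet : (Aᵀ * M).det ≠ 0 := by
    rw [Matrix.det_mul, Matrix.det_transpose, hAdet]
    exact mul_ne_zero hSdet hMdet
  have hNpos : 0 < (Aᵀ * M).det := aux_skew_det_pos _ hNskew hNdet
  rw [Matrix.det_mul, Matrix.det_transpose, hAdet] at hNpos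
  by_contra hle
  push_neg at hle
  have hlt : LinearMap.det S < 0 := lt_of_le_of_ne hle hSdet
  nlinarith
end

section
/- Let g : (0,∞) → ℂ and k : ℝⁿ → (0,∞) be C^r maps such that (a) for each j ≤ r there is C_{g,j} > 0 with t^j |g^{(j)}(t)| ≤ C_{g,j} |g(t)| for all t > 0, and (b) for each multi-index α with |α| ≤ r there is C_{k,α} > 0 with |∂^α k(x)| ≤ C_{k,α} k(x) for all x ∈ ℝⁿ. Then for each multi-index α with |α| ≤ r there is C_{g,k,α} > 0 such that |∂^α (g ∘ k)(x)| ≤ C_{g,k,α} |g(k(x))| for all x ∈ ℝⁿ. -/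
/-- If `g : (0,∞) → ℂ` satisfies `t^j |g^{(j)}(t)| ≤ C_{g,j} |g(t)|` for
`j ≤ r` and `k : ℝⁿ → (0,∞)` satisfies `‖∂^α k(x)‖ ≤ C_{k,α} k(x)` for `|α| ≤ r`, then
each derivative of order `≤ r` of `g ∘ k` is bounded by a constant times `|g(k(x))|`. -/
theorem faa_di_bruno_weight_estimate
    {n : ℕ} (r : ℕ) (g : ℝ → ℂ) (k : (Fin n → ℝ) → ℝ)
    (hg : ContDiffOn ℝ r g (Set.Ioi 0))
    (hk : ContDiff ℝ r k)
    (hkpos : ∀ x, 0 < k x)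
    (hgj : ∀ j ≤ r, ∃ C > 0, ∀ t > (0 : ℝ),
      t ^ j * ‖iteratedDerivWithin j g (Set.Ioi 0) t‖ ≤ C * ‖g t‖)
    (hkj : ∀ j ≤ r, ∃ C > 0, ∀ x, ‖iteratedFDeriv ℝ j k x‖ ≤ C * k x) :
    ∀ j ≤ r, ∃ C > 0, ∀ x,
      ‖iteratedFDeriv ℝ j (fun x => g (k x)) x‖ ≤ C * ‖g (k x)‖ := by
  -- totalize the constant families
  have hgj' : ∀ i : ℕ, ∃ C > (0:ℝ), i ≤ r → ∀ t > (0 : ℝ),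
      t ^ i * ‖iteratedDerivWithin i g (Set.Ioi 0) t‖ ≤ C * ‖g t‖ := by
    intro i
    by_cases h : i ≤ r
    · obtain ⟨C, hC, h'⟩ := hgj i h
      exact ⟨C, hC, fun _ => h'⟩
    · exact ⟨1, one_pos, fun h' => absurd h' h⟩
  have hkj' : ∀ i : ℕ, ∃ C > (0:ℝ), i ≤ r → ∀ x, ‖iteratedFDeriv ℝ i k x‖ ≤ C * k x := by
    intro i
    by_cases h : i ≤ r
    · obtain ⟨C, hC, h'⟩ := hkj i h
      exact ⟨C, hC, fun _ => h'⟩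
    · exact ⟨1, one_pos, fun h' => absurd h' h⟩
  choose Cg hCgpos hCg using hgj'
  choose Ck hCkpos hCk using hkj'
  set Mg : ℝ := ∑ i ∈ Finset.range (r + 1), Cg i with hMg
  have hMgpos : 0 < Mg := Finset.sum_pos (fun i _ => hCgpos i) ⟨0, by simp⟩
  have hMg_le : ∀ i ≤ r, Cg i ≤ Mg := by
    intro i hi
    exact Finset.single_le_sum (fun i _ => (hCgpos i).le)
      (Finset.mem_range.mpr (Nat.lt_succ_of_le hi))
  set Dk : ℝ := 1 + ∑ i ∈ Finset.range (r + 1), Ck i with hDk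
  have hDk1 : 1 ≤ Dk := by
    have : 0 ≤ ∑ i ∈ Finset.range (r + 1), Ck i :=
      Finset.sum_nonneg (fun i _ => (hCkpos i).le)
    linarith
  have hDk_le : ∀ i ≤ r, Ck i ≤ Dk := by
    intro i hi
    have := Finset.single_le_sum (fun i _ => (hCkpos i).le)
      (Finset.mem_range.mpr (Nat.lt_succ_of_le hi))
    linarith
  intro j hjr
  refine ⟨(Nat.factorial j : ℝ) * Mg * Dk ^ j, by positivity, fun x => ?_⟩
  set c : ℝ := k x with hc
  have hcpos : 0 < c := hkpos x
  -- the rescaled functions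
  set L : ℝ →L[ℝ] ℝ := c • ContinuousLinearMap.id ℝ ℝ with hL
  have hLapp : ∀ t : ℝ, L t = c * t := fun t => rfl
  have hLnorm : ‖L‖ ≤ c := by
    apply ContinuousLinearMap.opNorm_le_bound _ hcpos.le
    intro t
    rw [hLapp, norm_mul, Real.norm_eq_abs, abs_of_pos hcpos]
  have hpre : (⇑L) ⁻¹' Set.Ioi 0 = Set.Ioi 0 := by
    ext t
    simp only [Set.mem_preimage, Set.mem_Ioi, hLapp]
    constructor
    · intro h; nlinarith
    · intro h; positivity
  set gt' : ℝ → ℂ := g ∘ L with hgt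
  set kt : (Fin n → ℝ) → ℝ := fun y => c⁻¹ * k y with hkt
  have hcomp : (fun y => g (k y)) = gt' ∘ kt := by
    funext y
    simp only [hgt, hkt, Function.comp_apply, hLapp]
    rw [mul_inv_cancel_left₀ (ne_of_gt hcpos)]
  have hgt' : ContDiffOn ℝ r gt' (Set.Ioi 0) := by
    have := hg.comp_continuousLinearMap L
    rwa [hpre] at this
  have hkt' : ContDiffOn ℝ r kt Set.univ := (hk.const_smul c⁻¹).contDiffOn
  have hmaps : Set.MapsTo kt Set.univ (Set.Ioi 0) := by
    intro y _
    have := hkpos y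
    simp only [hkt, Set.mem_Ioi]
    positivity
  have hktx : kt x = 1 := inv_mul_cancel₀ (ne_of_gt hcpos)
  -- bound on derivatives of gt' at kt x = 1
  have hCbound : ∀ i, i ≤ j → ‖iteratedFDerivWithin ℝ i gt' (Set.Ioi 0) (kt x)‖
      ≤ Mg * ‖g c‖ := by
    intro i hij
    have hir : i ≤ r := hij.trans hjr
    rw [hktx]
    have h1 : L (1:ℝ) ∈ Set.Ioi (0:ℝ) := by
      rw [hLapp]; simpa using hcpos
    have heq := L.iteratedFDerivWithin_comp_right (f := g) hg (uniqueDiffOn_Ioi 0)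
      (by rw [hpre]; exact uniqueDiffOn_Ioi 0) h1 (Nat.cast_le.mpr hir)
    rw [hpre] at heq
    have hgt_eq : iteratedFDerivWithin ℝ i gt' (Set.Ioi 0) 1 =
        (iteratedFDerivWithin ℝ i g (Set.Ioi 0) (L 1)).compContinuousLinearMap
          fun _ => L := heq
    rw [hgt_eq]
    calc ‖(iteratedFDerivWithin ℝ i g (Set.Ioi 0) (L 1)).compContinuousLinearMap
          fun _ => L‖
        ≤ ‖iteratedFDerivWithin ℝ i g (Set.Ioi 0) (L 1)‖ * ∏ _m : Fin i, ‖L‖ :=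
          ContinuousMultilinearMap.norm_compContinuousLinearMap_le _ _
      _ ≤ ‖iteratedFDerivWithin ℝ i g (Set.Ioi 0) c‖ * c ^ i := by
          rw [hLapp, mul_one]
          refine mul_le_mul_of_nonneg_left ?_ (norm_nonneg _)
          rw [Finset.prod_const, Finset.card_univ, Fintype.card_fin]
          exact pow_le_pow_left₀ (norm_nonneg _) hLnorm i
      _ ≤ Mg * ‖g c‖ := by
          rw [norm_iteratedFDerivWithin_eq_norm_iteratedDerivWithin, mul_comm]
          calc c ^ i * ‖iteratedDerivWithin i g (Set.Ioi 0) c‖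
              ≤ Cg i * ‖g c‖ := hCg i hir c hcpos
            _ ≤ Mg * ‖g c‖ := by
                gcongr
                exact hMg_le i hir
  -- bound on derivatives of kt
  have hDbound : ∀ i, 1 ≤ i → i ≤ j →
      ‖iteratedFDerivWithin ℝ i kt Set.univ x‖ ≤ Dk ^ i := by
    intro i h1 hij
    have hir : i ≤ r := hij.trans hjr
    rw [iteratedFDerivWithin_univ]
    have : iteratedFDeriv ℝ i kt x = c⁻¹ • iteratedFDeriv ℝ i k x := by
      have := iteratedFDeriv_const_smul_apply (f := k) (i := i) (x := x)
        (a := c⁻¹) (hk.of_le (Nat.cast_le.mpr hir)).contDiffAt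
      simpa [hkt, Pi.smul_def, smul_eq_mul] using this
    rw [this]
    refine le_trans (ContinuousMultilinearMap.opNorm_smul_le _ _) ?_
    have : ‖(c⁻¹ : ℝ)‖ * ‖iteratedFDeriv ℝ i k x‖ ≤ c⁻¹ * (Ck i * c) := by
      rw [Real.norm_eq_abs, abs_of_pos (show (0:ℝ) < c⁻¹ by positivity)]
      exact mul_le_mul_of_nonneg_left (hCk i hir x) (by positivity)
    calc ‖(c⁻¹ : ℝ)‖ * ‖iteratedFDeriv ℝ i k x‖ ≤ c⁻¹ * (Ck i * c) := this
      _ = Ck i := by field_simp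
      _ ≤ Dk ^ i := (hDk_le i hir).trans (le_self_pow₀ hDk1 (by omega))
  have main := norm_iteratedFDerivWithin_comp_le (𝕜 := ℝ) hgt' hkt'
    (Nat.cast_le.mpr hjr) (uniqueDiffOn_Ioi 0) uniqueDiffOn_univ hmaps
    (Set.mem_univ x) hCbound hDbound
  rw [← hcomp, iteratedFDerivWithin_univ] at main
  calc ‖iteratedFDeriv ℝ j (fun x => g (k x)) x‖
      ≤ (j.factorial : ℝ) * (Mg * ‖g c‖) * Dk ^ j := main
    _ = (j.factorial : ℝ) * Mg * Dk ^ j * ‖g (k x)‖ := by rw [← hc]; ring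
end
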